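/- Let κ > 0, Γ_c > 0, Γ_g > 0, δ̃ > 0, ε_g ≥ 0, 0 < p < 1, 0 < q < 1 < φ_π, and g > 0 be real numbers. Set Γ_k := (1 + Γ_g)·ε_g, D_q := 1 − q + κΓ_c(φ_π − q), k := δ̃·g/(1 − p), c₂ := κ(φ_π − q)Γ_k·k / D_q, π₂ := −κ(1 − q)Γ_k·k / D_q, and define the threshold ε_g^I := ((φ_π − p)/(φ_π − 1)) · (Γ_g/(1 + Γ_g)) · (D_q/δ̃). Then ε_g^I > 0, and the unique pair (c₁, π₁) satisfying the normal-times short-run system c₁ = p·c₁ + (1−p)·c₂ − (φ_π·π₁ − p·π₁ − (1−p)·π₂) and π₁ = κ(Γ_c·c₁ + Γ_g·g) satisfies c₁ > 0 if and only if ε_g > ε_g^I. -/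

import Mathlib

theorem normal_times_crowding_in_threshold
    (κ Γc Γg δt εg p q φ g : ℝ)
    (hκ : 0 < κ) (hΓc : 0 < Γc) (hΓg : 0 < Γg) (hδt : 0 < δt) (hεg : 0 ≤ εg)
    (hp0 : 0 < p) (hp1 : p < 1) (hq0 : 0 < q) (hq1 : q < 1) (hφ : 1 < φ)
    (hg : 0 < g)
    (Γk Dq k c₂ π₂ εgI : ℝ)
    (hΓk : Γk = (1 + Γg) * εg)
    (hDq : Dq = 1 - q + κ * Γc * (φ - q))
    (hk : k = δt * g / (1 - p))
    (hc₂ : c₂ = κ * (φ - q) * Γk * k / Dq)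
    (hπ₂ : π₂ = -(κ * (1 - q) * Γk * k) / Dq)
    (hεgI : εgI = ((φ - p) / (φ - 1)) * (Γg / (1 + Γg)) * (Dq / δt)) :
    0 < εgI ∧
    ∀ c₁ π₁ : ℝ,
      (c₁ = p * c₁ + (1 - p) * c₂ - (φ * π₁ - p * π₁ - (1 - p) * π₂) ∧
       π₁ = κ * (Γc * c₁ + Γg * g)) →
      (0 < c₁ ↔ εgI < εg) := by
  have hφq : 0 < φ - q := by linarith
  have hDq0 : 0 < Dq := by
    have : 0 < κ * Γc * (φ - q) := by positivity
    rw [hDq]; linarith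
  have hDqne : Dq ≠ 0 := ne_of_gt hDq0
  have h1p : (0:ℝ) < 1 - p := by linarith
  have h1pne : (1:ℝ) - p ≠ 0 := ne_of_gt h1p
  have hφ1 : (0:ℝ) < φ - 1 := by linarith
  have hφp : (0:ℝ) < φ - p := by linarith
  have h1Γg : (0:ℝ) < 1 + Γg := by linarith
  have hεgI0 : 0 < εgI := by
    rw [hεgI]
    exact mul_pos (mul_pos (div_pos hφp hφ1) (div_pos hΓg h1Γg)) (div_pos hDq0 hδt)
  refine ⟨hεgI0, ?_⟩
  rintro c₁ π₁ ⟨h1, h2⟩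
  have hDp : (0:ℝ) < 1 - p + κ * Γc * (φ - p) := by
    have : 0 < κ * Γc * (φ - p) := by positivity
    linarith
  have key : c₁ * ((1 - p) * ((1 - p + κ * Γc * (φ - p)) * Dq)) =
      (1 - p) * (κ * g * ((1 + Γg) * εg * δt * (φ - 1) - (φ - p) * Γg * Dq)) := by
    rw [hc₂, hπ₂, hk, hΓk] at h1
    rw [h2] at h1
    field_simp at h1
    linear_combination (1 - p) * h1
  have hM : (0:ℝ) < (1 - p) * ((1 - p + κ * Γc * (φ - p)) * Dq) := by positivity
  have hthr : εgI < εg ↔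
      0 < (1 + Γg) * εg * δt * (φ - 1) - (φ - p) * Γg * Dq := by
    rw [hεgI]
    rw [div_mul_div_comm, div_mul_div_comm, div_lt_iff₀ (by positivity)]
    constructor <;> intro h <;> nlinarith
  rw [hthr]
  constructor
  · intro hc
    have hr : 0 < (1 - p) * (κ * g *
        ((1 + Γg) * εg * δt * (φ - 1) - (φ - p) * Γg * Dq)) := by
      rw [← key]; exact mul_pos hc hM
    by_contra h
    push_neg at h
    have : (1 - p) * (κ * g *
        ((1 + Γg) * εg * δt * (φ - 1) - (φ - p) * Γg * Dq)) ≤ 0 :=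
      mul_nonpos_of_nonneg_of_nonpos h1p.le
        (mul_nonpos_of_nonneg_of_nonpos (mul_pos hκ hg).le h)
    linarith
  · intro hr2
    have h3 : 0 < c₁ * ((1 - p) * ((1 - p + κ * Γc * (φ - p)) * Dq)) := by
      rw [key]; exact mul_pos h1p (mul_pos (mul_pos hκ hg) hr2)
    by_contra hc
    push_neg at hc
    have := mul_nonpos_of_nonpos_of_nonneg hc hM.le
    linarith
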